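/- Let α > 1/2. There exist constants K > 0 and R₀ such that for all R ≥ R₀ and all r with 0 ≤ r ≤ R, the integral M(r) := 2∫_{R-r}^{R} 2e^{(R-r-y)/2}·(α sinh(α y))/(2π(cosh(α R) - 1)) dy satisfies |M(r) - (2α/(π(α - 1/2)))·e^{-r/2}| ≤ K·e^{-r/2}·(e^{-(α - 1/2)r} + e^{-r}). -/

import Mathlib

open Real

lemma J_eq (α r R : ℝ) (hA : 0 < α - 1/2) :
    ∫ y in (R - r)..R, Real.exp ((R - r - y) / 2) * Real.sinh (α * y)
      = (Real.exp (α*R) * Real.exp (-r/2) - Real.exp (α*(R-r))) / (2*(α - 1/2))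
        + (Real.exp (-(α*R)) * Real.exp (-r/2) - Real.exp (-(α*(R-r)))) / (2*(α + 1/2)) := by
  have hB : 0 < α + 1/2 := by linarith
  have hderiv : ∀ y ∈ Set.uIcc (R-r) R, HasDerivAt (fun y =>
      Real.exp ((R-r)/2 + (α-1/2)*y)/(2*(α-1/2))
        + Real.exp ((R-r)/2 - (α+1/2)*y)/(2*(α+1/2)))
      (Real.exp ((R - r - y) / 2) * Real.sinh (α * y)) y := by
    intro y _
    have h1 : HasDerivAt (fun y : ℝ => (R-r)/2 + (α-1/2)*y) (α-1/2) y := by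
      simpa using ((hasDerivAt_id y).const_mul (α-1/2)).const_add ((R-r)/2)
    have h2 : HasDerivAt (fun y : ℝ => (R-r)/2 - (α+1/2)*y) (-(α+1/2)) y := by
      have := (((hasDerivAt_id y).const_mul (α+1/2)).neg).const_add ((R-r)/2)
      simpa [sub_eq_add_neg] using this
    have h1e := (Real.hasDerivAt_exp _).comp y h1
    have h2e := (Real.hasDerivAt_exp _).comp y h2
    have h := (h1e.div_const (2*(α-1/2))).add (h2e.div_const (2*(α+1/2)))
    convert h using 1
    · rfl
    · rfl
    · rfl
    have e1 : Real.exp ((R-r-y)/2) * Real.exp (α*y)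
        = Real.exp ((R-r)/2 + (α-1/2)*y) := by
      rw [← Real.exp_add]; congr 1; ring
    have e2 : Real.exp ((R-r-y)/2) * Real.exp (-(α*y))
        = Real.exp ((R-r)/2 - (α+1/2)*y) := by
      rw [← Real.exp_add]; congr 1; ring
    have c1 : (α - 1/2)/(2*(α-1/2)) = 1/2 := by
      rw [div_eq_iff (by positivity)]; ring
    have c2 : -(α + 1/2)/(2*(α+1/2)) = -(1/2) := by
      rw [div_eq_iff (by positivity)]; ring
    rw [Real.sinh_eq, ← e1, ← e2, mul_div_assoc, mul_div_assoc, c1, c2]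
    ring
  have hint : IntervalIntegrable (fun y => Real.exp ((R - r - y) / 2) * Real.sinh (α * y))
      MeasureTheory.volume (R-r) R := by
    apply Continuous.intervalIntegrable
    fun_prop
  rw [intervalIntegral.integral_eq_sub_of_hasDerivAt hderiv hint]
  simp only [← Real.exp_add]
  ring_nf

set_option maxHeartbeats 2000000 in
theorem stmt_11 (α : ℝ) (hα : 1 / 2 < α) :
    ∃ K R₀ : ℝ, 0 < K ∧
      ∀ R r : ℝ, R₀ ≤ R → 0 ≤ r → r ≤ R →
        |(2 * ∫ y in (R - r)..R,
            2 * Real.exp ((R - r - y) / 2) * (α * Real.sinh (α * y)) /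
              (2 * π * (Real.cosh (α * R) - 1))) -
          (2 * α / (π * (α - 1 / 2))) * Real.exp (-r / 2)| ≤
        K * Real.exp (-r / 2) * (Real.exp (-(α - 1 / 2) * r) + Real.exp (-r)) := by
  have hA : 0 < α - 1/2 := by linarith
  have hB : 0 < α + 1/2 := by linarith
  have hα0 : 0 < α := by linarith
  refine ⟨16*α/(α-1/2) + 8*α/(α+1/2), 4, by positivity, ?_⟩
  intro R r hR hr hrR
  have hπ := Real.pi_gt_three
  have hπ0 : 0 < π := by linarith
  have hR0 : 0 ≤ R := by linarith
  have hge : 2 ≤ α*R := by nlinarith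
  have ha : 0 < Real.exp (α*R) := Real.exp_pos _
  have ha' : 0 < Real.exp (-(α*R)) := Real.exp_pos _
  have hbpos : 0 < Real.exp (α*(R-r)) := Real.exp_pos _
  have hb' : 0 < Real.exp (-(α*(R-r))) := Real.exp_pos _
  have hu : 0 < Real.exp (-r/2) := Real.exp_pos _
  have hw : 0 < Real.exp (-(α-1/2)*r) := Real.exp_pos _
  have ha4 : 4 ≤ Real.exp (α*R) := by
    have h1 := Real.add_one_le_exp ((α*R)/2)
    have hsq : Real.exp ((α*R)/2) * Real.exp ((α*R)/2) = Real.exp (α*R) := by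
      rw [← Real.exp_add]; congr 1; ring
    nlinarith [Real.exp_pos ((α*R)/2)]
  have hDval : Real.cosh (α*R) - 1 = (Real.exp (α*R) + Real.exp (-(α*R)))/2 - 1 := by
    rw [Real.cosh_eq]
  have hD4 : Real.exp (α*R)/4 ≤ Real.cosh (α*R) - 1 := by
    rw [hDval]; nlinarith
  have hD0 : 0 < Real.cosh (α*R) - 1 := by nlinarith
  -- rewrite the integral
  have hI : (∫ y in (R-r)..R, 2 * Real.exp ((R - r - y)/2) * (α * Real.sinh (α*y)) /
        (2*π*(Real.cosh (α*R) - 1)))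
      = (α/(π*(Real.cosh (α*R) - 1))) *
          ∫ y in (R-r)..R, Real.exp ((R-r-y)/2) * Real.sinh (α*y) := by
    rw [← intervalIntegral.integral_const_mul]
    apply intervalIntegral.integral_congr
    intro y _
    have : π * (Real.cosh (α*R) - 1) ≠ 0 := by positivity
    field_simp
  rw [hI, J_eq α r R hA]
  -- key algebraic identity
  have hD0x : (0:ℝ) < (Real.exp (α*R) + Real.exp (-(α*R)))/2 - 1 := by
    rw [← hDval]; exact hD0
  have h2' : ∀ D : ℝ, D ≠ 0 → 2 * α / (π * (α - 1/2)) * Real.exp (-r/2)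
      = (2*α/(π*D)) * (D * Real.exp (-r/2)/(α-1/2)) := by
    intro D hD
    have h1 : π * (α - 1/2) ≠ 0 := by positivity
    have h2 : π * D ≠ 0 := mul_ne_zero hπ0.ne' hD
    rw [div_mul_eq_mul_div, div_mul_div_comm,
      div_eq_div_iff h1 (mul_ne_zero h2 (by positivity : (α-1/2) ≠ 0))]
    ring
  have h2 := h2' (Real.cosh (α*R) - 1) hD0.ne'
  have h3 : ((Real.exp (α*R) * Real.exp (-r/2) - Real.exp (α*(R-r))) / (2*(α - 1/2))
        + (Real.exp (-(α*R)) * Real.exp (-r/2) - Real.exp (-(α*(R-r)))) / (2*(α + 1/2)))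
      - (Real.cosh (α*R) - 1) * Real.exp (-r/2)/(α-1/2)
      = (Real.exp (-r/2)/(α-1/2)
          - Real.exp (α*(R-r))/(2*(α-1/2))
          - Real.exp (-(α*R))*Real.exp (-r/2)/(2*(α-1/2))
          + Real.exp (-(α*R))*Real.exp (-r/2)/(2*(α+1/2))
          - Real.exp (-(α*(R-r)))/(2*(α+1/2))) := by
    rw [hDval]
    field_simp
    ring
  have hKey : 2 * (α / (π * (Real.cosh (α*R) - 1)) *
        ((Real.exp (α*R) * Real.exp (-r/2) - Real.exp (α*(R-r))) / (2*(α - 1/2))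
          + (Real.exp (-(α*R)) * Real.exp (-r/2) - Real.exp (-(α*(R-r)))) / (2*(α + 1/2))))
      - 2 * α / (π * (α - 1/2)) * Real.exp (-r/2)
      = (2*α/(π*(Real.cosh (α*R) - 1))) *
        (Real.exp (-r/2)/(α-1/2)
          - Real.exp (α*(R-r))/(2*(α-1/2))
          - Real.exp (-(α*R))*Real.exp (-r/2)/(2*(α-1/2))
          + Real.exp (-(α*R))*Real.exp (-r/2)/(2*(α+1/2))
          - Real.exp (-(α*(R-r)))/(2*(α+1/2))) := by
    linear_combination (-1 : ℝ) * h2 + (2*α/(π*(Real.cosh (α*R) - 1))) * h3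
  rw [hKey]
  -- exponential comparison facts
  have hbe : Real.exp (α*(R-r)) = Real.exp (α*R) * (Real.exp (-r/2) * Real.exp (-(α-1/2)*r)) := by
    rw [← Real.exp_add, ← Real.exp_add]; congr 1; ring
  have h1 : (1:ℝ) ≤ Real.exp (α*R) * Real.exp (-(α-1/2)*r) := by
    rw [← Real.exp_add]
    have h := Real.exp_le_exp.mpr (show (0:ℝ) ≤ α*R + -(α-1/2)*r by nlinarith)
    simpa using h
  have h3 : Real.exp (-(α*R)) ≤ Real.exp (α*R) * Real.exp (-(α-1/2)*r) := by
    rw [← Real.exp_add]; exact Real.exp_le_exp.mpr (by nlinarith)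
  have h4 : Real.exp (-(α*(R-r))) ≤ Real.exp (α*R) * (Real.exp (-r/2) * Real.exp (-(α-1/2)*r)) := by
    rw [← Real.exp_add, ← Real.exp_add]; exact Real.exp_le_exp.mpr (by nlinarith)
  have hc0 : 0 < 2*α/(π*(Real.cosh (α*R) - 1)) :=
    div_pos (by linarith) (mul_pos hπ0 hD0)
  rw [abs_mul, abs_of_pos hc0]
  have hXS : |Real.exp (-r/2)/(α-1/2)
          - Real.exp (α*(R-r))/(2*(α-1/2))
          - Real.exp (-(α*R))*Real.exp (-r/2)/(2*(α-1/2))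
          + Real.exp (-(α*R))*Real.exp (-r/2)/(2*(α+1/2))
          - Real.exp (-(α*(R-r)))/(2*(α+1/2))|
      ≤ Real.exp (-r/2)/(α-1/2)
          + Real.exp (α*(R-r))/(2*(α-1/2))
          + Real.exp (-(α*R))*Real.exp (-r/2)/(2*(α-1/2))
          + Real.exp (-(α*R))*Real.exp (-r/2)/(2*(α+1/2))
          + Real.exp (-(α*(R-r)))/(2*(α+1/2)) := by
    have p1 : 0 ≤ Real.exp (-r/2)/(α-1/2) := by positivity
    have p2 : 0 ≤ Real.exp (α*(R-r))/(2*(α-1/2)) := by positivity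
    have p3 : 0 ≤ Real.exp (-(α*R))*Real.exp (-r/2)/(2*(α-1/2)) := by positivity
    have p4 : 0 ≤ Real.exp (-(α*R))*Real.exp (-r/2)/(2*(α+1/2)) := by positivity
    have p5 : 0 ≤ Real.exp (-(α*(R-r)))/(2*(α+1/2)) := by positivity
    rw [abs_le]; constructor <;> linarith
  have hS0 : 0 ≤ Real.exp (-r/2)/(α-1/2)
          + Real.exp (α*(R-r))/(2*(α-1/2))
          + Real.exp (-(α*R))*Real.exp (-r/2)/(2*(α-1/2))
          + Real.exp (-(α*R))*Real.exp (-r/2)/(2*(α+1/2))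
          + Real.exp (-(α*(R-r)))/(2*(α+1/2)) := by positivity
  have hc0le : 2*α/(π*(Real.cosh (α*R) - 1)) ≤ 8*α/Real.exp (α*R) := by
    rw [div_le_div_iff₀ (mul_pos hπ0 hD0) ha]
    nlinarith [mul_le_mul_of_nonneg_left hD4 hα0.le, mul_pos hα0 hD0, mul_pos hα0 ha]
  have hKpos : 0 < 16*α/(α-1/2) + 8*α/(α+1/2) := by positivity
  calc 2*α/(π*(Real.cosh (α*R) - 1)) * |Real.exp (-r/2)/(α-1/2)
          - Real.exp (α*(R-r))/(2*(α-1/2))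
          - Real.exp (-(α*R))*Real.exp (-r/2)/(2*(α-1/2))
          + Real.exp (-(α*R))*Real.exp (-r/2)/(2*(α+1/2))
          - Real.exp (-(α*(R-r)))/(2*(α+1/2))|
      ≤ 2*α/(π*(Real.cosh (α*R) - 1)) * (Real.exp (-r/2)/(α-1/2)
          + Real.exp (α*(R-r))/(2*(α-1/2))
          + Real.exp (-(α*R))*Real.exp (-r/2)/(2*(α-1/2))
          + Real.exp (-(α*R))*Real.exp (-r/2)/(2*(α+1/2))
          + Real.exp (-(α*(R-r)))/(2*(α+1/2))) :=
        mul_le_mul_of_nonneg_left hXS hc0.le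
    _ ≤ (8*α/Real.exp (α*R)) * (Real.exp (-r/2)/(α-1/2)
          + Real.exp (α*(R-r))/(2*(α-1/2))
          + Real.exp (-(α*R))*Real.exp (-r/2)/(2*(α-1/2))
          + Real.exp (-(α*R))*Real.exp (-r/2)/(2*(α+1/2))
          + Real.exp (-(α*(R-r)))/(2*(α+1/2))) :=
        mul_le_mul_of_nonneg_right hc0le hS0
    _ ≤ (8*α/Real.exp (α*R)) *
          (Real.exp (-r/2)*Real.exp (-(α-1/2)*r)*Real.exp (α*R)/(α-1/2)
          + Real.exp (-r/2)*Real.exp (-(α-1/2)*r)*Real.exp (α*R)/(2*(α-1/2))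
          + Real.exp (-r/2)*Real.exp (-(α-1/2)*r)*Real.exp (α*R)/(2*(α-1/2))
          + Real.exp (-r/2)*Real.exp (-(α-1/2)*r)*Real.exp (α*R)/(2*(α+1/2))
          + Real.exp (-r/2)*Real.exp (-(α-1/2)*r)*Real.exp (α*R)/(2*(α+1/2))) := by
        apply mul_le_mul_of_nonneg_left ?_ (by positivity)
        have num1 : Real.exp (-r/2) ≤ Real.exp (-r/2)*Real.exp (-(α-1/2)*r)*Real.exp (α*R) := by
          nlinarith [mul_le_mul_of_nonneg_left h1 hu.le]
        have num2 : Real.exp (α*(R-r)) ≤ Real.exp (-r/2)*Real.exp (-(α-1/2)*r)*Real.exp (α*R) :=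
          le_of_eq (by rw [hbe]; ring)
        have num3 : Real.exp (-(α*R))*Real.exp (-r/2)
            ≤ Real.exp (-r/2)*Real.exp (-(α-1/2)*r)*Real.exp (α*R) := by
          nlinarith [mul_le_mul_of_nonneg_left h3 hu.le]
        have num5 : Real.exp (-(α*(R-r))) ≤ Real.exp (-r/2)*Real.exp (-(α-1/2)*r)*Real.exp (α*R) := by
          nlinarith [h4]
        gcongr
    _ = (16*α/(α-1/2) + 8*α/(α+1/2)) * Real.exp (-r/2) * Real.exp (-(α-1/2)*r) := by
        have gen : ∀ A B a u w : ℝ, A ≠ 0 → B ≠ 0 → a ≠ 0 →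
            (8*α/a) * (u*w*a/A + u*w*a/(2*A) + u*w*a/(2*A) + u*w*a/(2*B) + u*w*a/(2*B))
              = (16*α/A + 8*α/B)*u*w := by
          intro A B a u w hA hB ha
          field_simp
          ring
        exact gen (α-1/2) (α+1/2) _ _ _ hA.ne' hB.ne' ha.ne'
    _ ≤ (16*α/(α-1/2) + 8*α/(α+1/2)) * Real.exp (-r/2) * (Real.exp (-(α-1/2)*r) + Real.exp (-r)) := by
        nlinarith [mul_pos (mul_pos hKpos hu) (Real.exp_pos (-r))]
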